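/- Let u satisfy Assumptions 1 and 2 and let x_k* be the reservation value of box k given uncovered prizes x, with 0 < x_k* < ∞. If the realized prize x_ℓ of another box satisfies x_ℓ ≥ x_k*, then the reservation value of box k after uncovering x_ℓ is 0: c_k ≥ ∫[u(x, x_ℓ, y, t) - u(x, x_ℓ, y)] dF_k(t) for all y ≥ 0, in particular y = 0. -/

import Mathlib

open scoped NNReal

/-- `u` is symmetric: invariant under permutations of its arguments. -/
def IsSymmU (u : List ℝ≥0 → ℝ) : Prop := ∀ l l' : List ℝ≥0, l.Perm l' → u l = u l'

/-- `u` is nondecreasing in each argument. -/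
def IsMonoU (u : List ℝ≥0 → ℝ) : Prop :=
  ∀ l l' : List ℝ≥0, List.Forall₂ (· ≤ ·) l l' → u l ≤ u l'

/-- `u` is submodular: `u(x∧y)+u(x∨y) ≤ u(x)+u(y)` for equal-length tuples. -/
def IsSubmodU (u : List ℝ≥0 → ℝ) : Prop := ∀ l l' : List ℝ≥0, l.length = l'.length →
  u (List.zipWith min l l') + u (List.zipWith max l l') ≤ u l + u l'

/-- `u` is continuous on tuples of each fixed length. -/
def IsContU (u : List ℝ≥0 → ℝ) : Prop :=
  ∀ n : ℕ, Continuous (fun v : Fin n → ℝ≥0 => u (List.ofFn v))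

/-- Assumption 1: `u(∅)=0`, prepending a zero leaves `u` unchanged, `u` nonnegative,
continuous, symmetric, nondecreasing and submodular. -/
def Assumption1 (u : List ℝ≥0 → ℝ) : Prop :=
  u [] = 0 ∧ (∀ l, u (0 :: l) = u l) ∧ (∀ l, 0 ≤ u l) ∧
    IsContU u ∧ IsSymmU u ∧ IsMonoU u ∧ IsSubmodU u

/-- Assumption 2: the benefit of raising an argument from `0` to `xi` does not
depend on the values of other arguments exceeding `xi`. -/
def Assumption2 (u : List ℝ≥0 → ℝ) : Prop :=
  ∀ (l : List ℝ≥0) (xi xlo xhi : ℝ≥0), xi ≤ xlo → xlo < xhi →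
    u (l ++ [xhi, xi]) - u (l ++ [xhi, 0]) = u (l ++ [xlo, xi]) - u (l ++ [xlo, 0])

open MeasureTheory

/-- If, given uncovered prizes `x`, a newly uncovered prize `x_ℓ` satisfies the
stopping inequality `u(x, x_ℓ) ≥ -c_k + ∫ u(x, x_ℓ, t) dF_k(t)` (as happens when
`x_ℓ ≥ x_k*`), then the reservation value of box `k` after uncovering `x_ℓ` is
`0`: for every `y ≥ 0`, `c_k ≥ ∫ (u(x, x_ℓ, y, t) - u(x, x_ℓ, y)) dF_k(t)`. -/
theorem zero_drop (u : List ℝ≥0 → ℝ) (hS : IsSymmU u) (hZ : ∀ l, u (0 :: l) = u l)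
    (l m : List ℝ≥0) (h : l.Perm (0 :: m)) : u l = u m := by
  rw [hS l (0 :: m) h, hZ]

theorem stmt_18 (u : List ℝ≥0 → ℝ) (hA1 : Assumption1 u) (hA2 : Assumption2 u)
    (F : Measure ℝ≥0) [IsProbabilityMeasure F]
    (hInt : ∀ l : List ℝ≥0, Integrable (fun t => u (l ++ [t])) F)
    (c : ℝ) (hc : 0 ≤ c) (x : List ℝ≥0) (xℓ : ℝ≥0)
    (hstop : -c + ∫ t, u (x ++ [xℓ, t]) ∂F ≤ u (x ++ [xℓ])) :
    ∀ y : ℝ≥0, (∫ t, (u (x ++ [xℓ, y, t]) - u (x ++ [xℓ, y])) ∂F) ≤ c := by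
  obtain ⟨h0, hZ, hNN, hC, hS, hM, hSub⟩ := hA1
  intro y
  -- pointwise bound
  have key : ∀ t : ℝ≥0,
      u (x ++ [xℓ, y, t]) - u (x ++ [xℓ, y]) ≤ u (x ++ [xℓ, t]) - u (x ++ [xℓ]) := by
    intro t
    have hsub := hSub (x ++ [xℓ, y, 0]) (x ++ [xℓ, 0, t]) (by simp)
    have hmin : List.zipWith min (x ++ [xℓ, y, 0]) (x ++ [xℓ, 0, t]) = x ++ [xℓ, 0, 0] := by
      rw [List.zipWith_append (by rfl : x.length = x.length)]
      have : List.zipWith min x x = x := by induction x with | nil => rfl | cons a l ih => simp [ih]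
      simp [this]
    have hmax : List.zipWith max (x ++ [xℓ, y, 0]) (x ++ [xℓ, 0, t]) = x ++ [xℓ, y, t] := by
      rw [List.zipWith_append (by rfl : x.length = x.length)]
      have : List.zipWith max x x = x := by induction x with | nil => rfl | cons a l ih => simp [ih]
      simp [this]
    rw [hmin, hmax] at hsub
    have e1 : u (x ++ [xℓ, 0, 0]) = u (x ++ [xℓ]) := by
      rw [zero_drop u hS hZ _ (x ++ [xℓ, 0]) (by
        refine List.Perm.trans ?_ (List.perm_append_singleton 0 (x ++ [xℓ, 0])).symm.symm
        simp)]
      exact zero_drop u hS hZ _ (x ++ [xℓ]) (by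
        simpa using (List.perm_append_singleton 0 (x ++ [xℓ])))
    have e2 : u (x ++ [xℓ, y, 0]) = u (x ++ [xℓ, y]) := by
      exact zero_drop u hS hZ _ (x ++ [xℓ, y]) (by
        simpa using (List.perm_append_singleton 0 (x ++ [xℓ, y])))
    have e3 : u (x ++ [xℓ, 0, t]) = u (x ++ [xℓ, t]) := by
      refine zero_drop u hS hZ _ (x ++ [xℓ, t]) ?_
      have : (x ++ [xℓ, 0, t]) = (x ++ [xℓ]) ++ [0, t] := by simp
      rw [this]
      refine List.Perm.trans (List.perm_append_comm) ?_
      simpa using List.Perm.cons 0 (List.perm_append_singleton t (x ++ [xℓ])).symm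
    rw [e2, e3] at hsub
    linarith
  have hI1 : Integrable (fun t => u (x ++ [xℓ, y, t])) F := by
    have := hInt (x ++ [xℓ, y]); simpa using this
  have hI2 : Integrable (fun t => u (x ++ [xℓ, t])) F := by
    have := hInt (x ++ [xℓ]); simpa using this
  have hle : (∫ t, (u (x ++ [xℓ, y, t]) - u (x ++ [xℓ, y])) ∂F)
      ≤ ∫ t, (u (x ++ [xℓ, t]) - u (x ++ [xℓ])) ∂F := by
    refine integral_mono (hI1.sub (integrable_const _)) (hI2.sub (integrable_const _)) key
  have hval : (∫ t, (u (x ++ [xℓ, t]) - u (x ++ [xℓ])) ∂F)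
      = (∫ t, u (x ++ [xℓ, t]) ∂F) - u (x ++ [xℓ]) := by
    rw [integral_sub hI2 (integrable_const _), integral_const]
    simp
  linarith [hle, hval, hstop]
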